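/- Let G be a finite simple undirected graph with edge list e1, …, em (m ≥ 1), and let F_G be the sensori-computational device constructed from G as described in the context. Then G admits a proper 3-coloring if and only if there exists an observation variator (D, ▷) with |D| ≤ 3 such that F_G is Δ(F_G, D)-simulatable (i.e., F_G has a derivative under (D, ▷)). -/

import Mathlib

/-- A sensori-computational device: a finite nonempty set of states `V`,
a nonempty set `V0` of initial states, observations `Y`, a transition
labelling `tr`, and an output function `out` with nonempty values. -/
structure SCD (Y : Type) (C : Type) : Type 1 where
  V : Type
  finV : Fintype V
  V0 : Set V
  V0_nonempty : V0.Nonempty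
  tr : V → V → Set Y
  out : V → Set C
  out_nonempty : ∀ v, (out v).Nonempty

namespace SCD

variable {Y C : Type}

/-- `Traces F v s w`: string `s` reaches state `w` when traced from `v`. -/
inductive Traces (F : SCD Y C) : F.V → List Y → F.V → Prop
  | nil (v : F.V) : Traces F v [] v
  | cons {v w u : F.V} {y : Y} {s : List Y} :
      y ∈ F.tr v w → Traces F w s u → Traces F v (y :: s) u

/-- The set of states reached by `s` from some initial state. -/
def reached (F : SCD Y C) (s : List Y) : Set F.V :=
  {w | ∃ v0 ∈ F.V0, F.Traces v0 s w}

/-- The (interaction) language of `F`. -/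
def lang (F : SCD Y C) : Set (List Y) :=
  {s | (F.reached s).Nonempty}

/-- The set of outputs of all states reached by `s`. -/
def outs (F : SCD Y C) (s : List Y) : Set C :=
  ⋃ v ∈ F.reached s, F.out v

end SCD

/-- `F'` output simulates `F` modulo the relation `R`. -/
def OutSim {A B C : Type} (F : SCD A C) (F' : SCD B C)
    (R : List A → List B → Prop) : Prop :=
  ∀ s ∈ F.lang,
    (∃ t, R s t) ∧ ∀ t, R s t → t ∈ F'.lang ∧ F'.outs t ⊆ F.outs s

/-- `F` is `R`-simulatable: some device output simulates `F` modulo `R`. -/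
def Simulatable {A B C : Type} (F : SCD A C)
    (R : List A → List B → Prop) : Prop :=
  ∃ F' : SCD B C, OutSim F F' R

/-- Composition of relations (on strings), `R ⨟ S`. -/
def relComp {α β γ : Type*} (R : α → β → Prop) (S : β → γ → Prop) :
    α → γ → Prop :=
  fun a c => ∃ b, R a b ∧ S b c
/-- `DeltaFrom rel y s ds`: from previous symbol `y`, the remaining string `s`
corresponds to the difference string `ds` via the ternary relation `rel`. -/
inductive DeltaFrom {Y D : Type} (rel : Y → D → Y → Prop) :
    Y → List Y → List D → Prop
  | nil (y : Y) : DeltaFrom rel y [] []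
  | cons {y y' : Y} {d : D} {s : List Y} {ds : List D} :
      rel y d y' → DeltaFrom rel y' s ds → DeltaFrom rel y (y' :: s) (d :: ds)

/-- The delta relation `Δ(F,D)` associated to a variator `rel` and a language
`L` (taken to be `L(F)`): it relates `ε` to `ε`, and
`y₀y₁…yₘ ∈ L` to `y₀d₁…dₘ` whenever `rel y_{k-1} d_k y_k` for each `k`.
The codomain alphabet `Y ⊕ D` holds the leading absolute symbol (left) and
the differences (right). -/
def DeltaRel {Y D : Type} (L : Set (List Y)) (rel : Y → D → Y → Prop) :
    List Y → List (Y ⊕ D) → Prop :=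
  fun s t => s ∈ L ∧
    ((s = [] ∧ t = []) ∨
      ∃ (y : Y) (rest : List Y) (ds : List D),
        s = y :: rest ∧ t = Sum.inl y :: ds.map Sum.inr ∧
        DeltaFrom rel y rest ds)

/-- States of the device constructed from a graph with `m` listed edges:
an initial state `v0` and, for each edge `j`, a head `h j`, middle states
`m1 j`, `m2 j`, and tail states `t1 j`, `t2 j`. -/
inductive GState (m : ℕ) : Type
  | v0 : GState m
  | h (j : Fin m) : GState m
  | m1 (j : Fin m) : GState m
  | m2 (j : Fin m) : GState m
  | t1 (j : Fin m) : GState m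
  | t2 (j : Fin m) : GState m
  deriving DecidableEq, Fintype

/-- Transitions of the device constructed from the edge list `E`
(observations are `Option Vg`, with `none` playing the role of the fresh
symbol `x`). -/
def gTau {Vg : Type} {m : ℕ} (E : Fin m → Vg × Vg) :
    GState m → GState m → Set (Option Vg)
  | GState.v0, GState.h j => if (j : ℕ) = 0 then {none} else ∅
  | GState.h j, GState.m1 k => if j = k then {some (E j).1} else ∅
  | GState.h j, GState.m2 k => if j = k then {some (E j).2} else ∅
  | GState.m1 j, GState.t1 k => if j = k then {some (E j).1} else ∅
  | GState.m2 j, GState.t2 k => if j = k then {some (E j).2} else ∅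
  | GState.t1 j, GState.h k => if (j : ℕ) + 1 = (k : ℕ) then {none} else ∅
  | GState.t2 j, GState.h k => if (j : ℕ) + 1 = (k : ℕ) then {none} else ∅
  | _, _ => ∅

/-- Outputs: `0` everywhere except `1` at `m1` states and `2` at `m2`
states. -/
def gOut {m : ℕ} : GState m → Set (Fin 3)
  | GState.m1 _ => {1}
  | GState.m2 _ => {2}
  | _ => {0}

/-- The sensori-computational device `F_G` constructed from the edge list
`E` of a graph. -/
def FG {Vg : Type} {m : ℕ} (E : Fin m → Vg × Vg) :
    SCD (Option Vg) (Fin 3) where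
  V := GState m
  finV := inferInstance
  V0 := {GState.v0}
  V0_nonempty := ⟨GState.v0, rfl⟩
  tr := gTau E
  out := gOut
  out_nonempty := fun v => by cases v <;> exact ⟨_, rfl⟩

namespace Stmt7Aux

variable {Vg : Type} {m : ℕ}

/-- No transition enters the initial state. -/
lemma target_ne_v0 {E : Fin m → Vg × Vg} {v w : GState m} {y : Option Vg}
    (h : y ∈ gTau E v w) : w ≠ GState.v0 := by
  intro hw; subst hw; cases v <;> exact h.elim

/-- Determinism of the transition labelling. -/
lemma gTau_det (E : Fin m → Vg × Vg) (hloop : ∀ j, (E j).1 ≠ (E j).2)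
    {v w w' : GState m} {y : Option Vg}
    (h1 : y ∈ gTau E v w) (h2 : y ∈ gTau E v w') : w = w' := by
  cases v <;> cases w <;> cases w' <;>
    simp only [gTau, Set.mem_empty_iff_false] at h1 h2 <;>
    try exact h1.elim
  all_goals
    split_ifs at h1 h2 <;>
      first
        | exact h1.elim
        | exact h2.elim
        | (try subst_vars) <;> simp_all <;>
          first
            | rfl
            | (congr 1; omega)
            | exact hloop _ (by assumption)
            | exact hloop _ (Eq.symm (by assumption))

lemma traces_det {E : Fin m → Vg × Vg} (hloop : ∀ j, (E j).1 ≠ (E j).2)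
    {v : (FG E).V} {s : List (Option Vg)} {w w' : (FG E).V}
    (h1 : (FG E).Traces v s w) (h2 : (FG E).Traces v s w') : w = w' := by
  induction h1 generalizing w' with
  | nil => cases h2; rfl
  | cons hy _ ih =>
    cases h2 with
    | cons hy' h' =>
      cases gTau_det E hloop hy hy'
      exact ih h'

lemma traces_append {Y C : Type} {F : SCD Y C} {v w u : F.V}
    {s s' : List Y} (h1 : F.Traces v s w) (h2 : F.Traces w s' u) :
    F.Traces v (s ++ s') u := by
  induction h1 with
  | nil => exact h2
  | cons hy _ ih => exact SCD.Traces.cons hy (ih h2)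

/-- The canonical string (after the leading `x`) reaching head `h k`. -/
def B (E : Fin m → Vg × Vg) (hm : 0 < m) : ℕ → List (Option Vg)
  | 0 => []
  | k + 1 =>
    B E hm k ++ [some (E ⟨k % m, Nat.mod_lt _ hm⟩).1,
      some (E ⟨k % m, Nat.mod_lt _ hm⟩).1, none]

lemma getLastD_B (E : Fin m → Vg × Vg) (hm : 0 < m) (k : ℕ) :
    (B E hm k).getLastD none = none := by
  cases k with
  | zero => rfl
  | succ k =>
    rw [show B E hm (k + 1)
        = (B E hm k ++ [some (E ⟨k % m, Nat.mod_lt _ hm⟩).1,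
            some (E ⟨k % m, Nat.mod_lt _ hm⟩).1]) ++ [none] by
      simp [B], List.getLastD_concat]

lemma trace_B (E : Fin m → Vg × Vg) (hm : 0 < m) :
    ∀ k (hk : k < m),
      (FG E).Traces GState.v0 (none :: B E hm k) (GState.h ⟨k, hk⟩) := by
  intro k
  induction k with
  | zero =>
    intro hk
    refine SCD.Traces.cons ?_ (SCD.Traces.nil _)
    show none ∈ gTau E GState.v0 (GState.h ⟨0, hk⟩)
    simp [gTau]
  | succ k ih =>
    intro hk
    have hk' : k < m := Nat.lt_of_succ_lt hk
    have hmod : (⟨k % m, Nat.mod_lt _ hm⟩ : Fin m) = ⟨k, hk'⟩ := by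
      ext; exact Nat.mod_eq_of_lt hk'
    have h1 := ih hk'
    show (FG E).Traces GState.v0
      ((none :: B E hm k) ++ [some (E ⟨k % m, Nat.mod_lt _ hm⟩).1,
        some (E ⟨k % m, Nat.mod_lt _ hm⟩).1, none]) (GState.h ⟨k + 1, hk⟩)
    refine traces_append h1 ?_
    rw [hmod]
    refine SCD.Traces.cons (w := GState.m1 ⟨k, hk'⟩) ?_
      (SCD.Traces.cons (w := GState.t1 ⟨k, hk'⟩) ?_
        (SCD.Traces.cons (w := GState.h ⟨k + 1, hk⟩) ?_ (SCD.Traces.nil _)))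
    · show some (E ⟨k, hk'⟩).1 ∈ gTau E (GState.h ⟨k, hk'⟩) (GState.m1 ⟨k, hk'⟩)
      simp [gTau]
    · show some (E ⟨k, hk'⟩).1 ∈ gTau E (GState.m1 ⟨k, hk'⟩) (GState.t1 ⟨k, hk'⟩)
      simp [gTau]
    · show none ∈ gTau E (GState.t1 ⟨k, hk'⟩) (GState.h ⟨k + 1, hk⟩)
      simp [gTau]

/-- The canonical string reaching the middle state `m1 j` (`b = false`)
or `m2 j` (`b = true`). -/
def midStr (E : Fin m → Vg × Vg) (hm : 0 < m) (j : Fin m) (b : Bool) :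
    List (Option Vg) :=
  none :: (B E hm j.1 ++ [some (if b then (E j).2 else (E j).1)])

lemma trace_mid (E : Fin m → Vg × Vg) (hm : 0 < m) (j : Fin m) (b : Bool) :
    (FG E).Traces GState.v0 (midStr E hm j b)
      (if b then GState.m2 j else GState.m1 j) := by
  have h1 := trace_B E hm j.1 j.2
  have h2 : (FG E).Traces GState.v0
      ((none :: B E hm j.1) ++ [some (if b then (E j).2 else (E j).1)])
      (if b then GState.m2 j else GState.m1 j) := by
    refine traces_append h1 ?_
    cases b with
    | false =>
      refine SCD.Traces.cons ?_ (SCD.Traces.nil _)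
      show some (E j).1 ∈ gTau E (GState.h ⟨j.1, j.2⟩) (GState.m1 j)
      simp [gTau, Fin.eta]
    | true =>
      refine SCD.Traces.cons ?_ (SCD.Traces.nil _)
      show some (E j).2 ∈ gTau E (GState.h ⟨j.1, j.2⟩) (GState.m2 j)
      simp [gTau, Fin.eta]
  simpa [midStr] using h2

lemma mid_lang (E : Fin m → Vg × Vg) (hm : 0 < m) (j : Fin m) (b : Bool) :
    midStr E hm j b ∈ (FG E).lang :=
  ⟨_, GState.v0, rfl, trace_mid E hm j b⟩

lemma outs_mid (E : Fin m → Vg × Vg) (hloop : ∀ j, (E j).1 ≠ (E j).2)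
    (hm : 0 < m) (j : Fin m) (b : Bool) :
    (FG E).outs (midStr E hm j b) ⊆ (if b then {2} else {1}) := by
  intro c hc
  rcases Set.mem_iUnion₂.1 hc with ⟨w, ⟨v', hv', htr⟩, hcw⟩
  have hv0 : v' = GState.v0 := hv'
  subst hv0
  have := traces_det hloop htr (trace_mid E hm j b)
  subst this
  cases b <;> simpa [FG, gOut] using hcw

lemma deltaFrom_concat {Y D : Type} {rel : Y → D → Y → Prop}
    {y : Y} {l : List Y} {ds : List D} {a : Y} {d : D}
    (h : DeltaFrom rel y l ds) (hd : rel (l.getLastD y) d a) :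
    DeltaFrom rel y (l ++ [a]) (ds ++ [d]) := by
  induction h with
  | nil => exact DeltaFrom.cons hd (DeltaFrom.nil _)
  | cons hr _ ih =>
    rw [List.getLastD_cons] at hd
    exact DeltaFrom.cons hr (ih hd)

lemma deltaFrom_concat_inv {Y D : Type} {rel : Y → D → Y → Prop} :
    ∀ {y : Y} {l : List Y} {ds : List D} {a : Y},
      DeltaFrom rel y (l ++ [a]) ds →
      ∃ ds' d, ds = ds' ++ [d] ∧ DeltaFrom rel y l ds' ∧
        rel (l.getLastD y) d a := by
  intro y l
  induction l generalizing y with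
  | nil =>
    intro ds a h
    cases h with
    | cons hr h2 =>
      cases h2
      exact ⟨[], _, rfl, DeltaFrom.nil _, hr⟩
  | cons b l' ih =>
    intro ds a h
    cases h with
    | cons hr h2 =>
      rcases ih h2 with ⟨ds', d, rfl, h3, h4⟩
      exact ⟨_ :: ds', d, rfl, DeltaFrom.cons hr h3,
        by rwa [List.getLastD_cons]⟩

section Forward

variable (col : Vg → Fin 3)

/-- Extend a coloring to observations, with the fresh symbol colored `0`. -/
def colO : Option Vg → Fin 3 := fun o => o.elim 0 col

/-- The variator relation induced by a coloring. -/
def relF : Option Vg → Fin 3 → Option Vg → Prop :=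
  fun _ d y' => d = colO col y'

/-- Encoding of observations into the derived alphabet, depending on the
current state (absolute at the initial state, a difference elsewhere). -/
def encv : GState m → Option Vg → Option Vg ⊕ Fin 3
  | GState.v0, y => Sum.inl y
  | _, y => Sum.inr (colO col y)

lemma encv_ne_v0 {v : GState m} (hv : v ≠ GState.v0) (y : Option Vg) :
    encv col v y = Sum.inr (colO col y) := by
  cases v with
  | v0 => exact absurd rfl hv
  | _ => rfl

/-- The simulating device. -/
def FG' (E : Fin m → Vg × Vg) : SCD (Option Vg ⊕ Fin 3) (Fin 3) where
  V := GState m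
  finV := inferInstance
  V0 := {GState.v0}
  V0_nonempty := ⟨GState.v0, rfl⟩
  tr := fun v w => encv col v '' gTau E v w
  out := gOut
  out_nonempty := fun v => by cases v <;> exact ⟨_, rfl⟩

/-- Encoding of a whole string. -/
def encS : List (Option Vg) → List (Option Vg ⊕ Fin 3)
  | [] => []
  | y :: r => Sum.inl y :: r.map (fun z => Sum.inr (colO col z))

lemma fwdT (E : Fin m → Vg × Vg) :
    ∀ {v : (FG E).V} {s : List (Option Vg)} {w : (FG E).V},
      v ≠ GState.v0 → (FG E).Traces v s w →
      (FG' col E).Traces v (s.map (fun z => Sum.inr (colO col z))) w := by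
  intro v s w hv h
  induction h with
  | nil => exact SCD.Traces.nil _
  | @cons v1 w1 u1 y1 s1 hy _ ih =>
    exact SCD.Traces.cons ⟨y1, hy, encv_ne_v0 col hv y1⟩
      (ih (target_ne_v0 hy))

lemma uniq_symbol (E : Fin m → Vg × Vg)
    (hcol : ∀ j, col (E j).1 ≠ col (E j).2)
    {v w w' : GState m} {y y' : Option Vg} (hv : v ≠ GState.v0)
    (h : y ∈ gTau E v w) (h' : y' ∈ gTau E v w')
    (hc : colO col y = colO col y') : y = y' := by
  cases v <;> cases w <;> cases w' <;>
    simp only [gTau, Set.mem_empty_iff_false] at h h' <;>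
    first
      | exact absurd rfl hv
      | exact h.elim
      | skip
  all_goals
    split_ifs at h h' <;>
      first
        | exact h.elim
        | exact h'.elim
        | (subst_vars; simp_all [colO]) <;>
            first
              | rfl
              | exact absurd hc (hcol _)
              | exact absurd hc.symm (hcol _)

lemma bwdT (E : Fin m → Vg × Vg) (hloop : ∀ j, (E j).1 ≠ (E j).2)
    (hcol : ∀ j, col (E j).1 ≠ col (E j).2) :
    ∀ {v : (FG E).V} {s : List (Option Vg)} {w w' : (FG E).V},
      v ≠ GState.v0 → (FG E).Traces v s w →
      (FG' col E).Traces v (s.map (fun z => Sum.inr (colO col z))) w' →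
      (FG E).Traces v s w' := by
  intro v s
  induction s generalizing v with
  | nil =>
    intro w w' hv h h'
    rw [List.map_nil] at h'
    cases h; match h' with | .nil _ => exact SCD.Traces.nil _
  | cons y1 s1 ih =>
    intro w w' hv h h'
    rw [List.map_cons] at h'
    cases h with
    | @cons _ w1 _ _ _ hy hr =>
      match h' with
      | @SCD.Traces.cons _ _ _ _ w1' _ _ _ hz h2 =>
        rcases hz with ⟨y', hy', heq⟩
        rw [encv_ne_v0 col hv y'] at heq
        have hcy : colO col y1 = colO col y' := by
          have := heq
          injection this with h5
          exact h5.symm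
        have hyy : y1 = y' := uniq_symbol col E hcol hv hy hy' hcy
        subst hyy
        cases gTau_det E hloop hy hy'
        exact SCD.Traces.cons hy (ih (target_ne_v0 hy) hr h2)

lemma fwd0 (E : Fin m → Vg × Vg) {s : List (Option Vg)} {w : GState m}
    (h : (FG E).Traces GState.v0 s w) :
    (FG' col E).Traces GState.v0 (encS col s) w := by
  match h with
  | .nil _ => exact SCD.Traces.nil _
  | @SCD.Traces.cons _ _ _ _ w1 _ y1 s1 hy h2 =>
    exact SCD.Traces.cons ⟨y1, hy, rfl⟩ (fwdT col E (target_ne_v0 hy) h2)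

lemma bwd0 (E : Fin m → Vg × Vg) (hloop : ∀ j, (E j).1 ≠ (E j).2)
    (hcol : ∀ j, col (E j).1 ≠ col (E j).2)
    {s : List (Option Vg)} {w w' : GState m}
    (h : (FG E).Traces GState.v0 s w)
    (h' : (FG' col E).Traces GState.v0 (encS col s) w') :
    (FG E).Traces GState.v0 s w' := by
  match h with
  | .nil _ => match h' with | .nil _ => exact SCD.Traces.nil _
  | @SCD.Traces.cons _ _ _ _ w1 _ y1 s1 hy h2 =>
    match h' with
    | @SCD.Traces.cons _ _ _ _ w1' _ _ _ hz h3 =>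
      rcases hz with ⟨y', hy', heq⟩
      have hyy : y' = y1 := by
        have h5 : Sum.inl (β := Fin 3) y' = Sum.inl y1 := heq
        injection h5
      subst hyy
      cases gTau_det E hloop hy hy'
      exact SCD.Traces.cons hy
        (bwdT col E hloop hcol (target_ne_v0 hy) h2 h3)

lemma deltaFrom_relF (y : Option Vg) (rest : List (Option Vg)) :
    DeltaFrom (relF col) y rest (rest.map (colO col)) := by
  induction rest generalizing y with
  | nil => exact DeltaFrom.nil _
  | cons a r ih => exact DeltaFrom.cons rfl (ih a)

lemma deltaFrom_relF_eq {y : Option Vg} {rest : List (Option Vg)}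
    {ds : List (Fin 3)} (h : DeltaFrom (relF col) y rest ds) :
    ds = rest.map (colO col) := by
  induction h with
  | nil => rfl
  | cons hr _ ih => rw [ih, hr]; rfl

end Forward

end Stmt7Aux

/-- a finite simple undirected graph, given by an edge list
`E : Fin m → Vg × Vg` (with `m ≥ 1`, loopless, and edges pairwise distinct
as unordered pairs) admits a proper 3-coloring iff there is an observation
variator with at most 3 differences under which `F_G` has a derivative. -/
theorem stmt7 {Vg : Type} {m : ℕ} (hm : 0 < m) (E : Fin m → Vg × Vg)
    (hloop : ∀ j, (E j).1 ≠ (E j).2)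
    (hsimple : ∀ j k,
        (((E j).1 = (E k).1 ∧ (E j).2 = (E k).2) ∨
         ((E j).1 = (E k).2 ∧ (E j).2 = (E k).1)) → j = k) :
    (∃ col : Vg → Fin 3, ∀ j, col (E j).1 ≠ col (E j).2) ↔
    (∃ (D : Type) (instD : Fintype D)
        (rel : Option Vg → D → Option Vg → Prop),
        @Fintype.card D instD ≤ 3 ∧
        Simulatable (FG E) (DeltaRel (FG E).lang rel)) := by
  classical
  constructor
  · -- 3-coloring ⇒ variator with a derivative
    rintro ⟨col, hcol⟩
    refine ⟨Fin 3, inferInstance, Stmt7Aux.relF col, by simp, Stmt7Aux.FG' col E, ?_⟩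
    intro s hs
    obtain ⟨w, v', hv', htr⟩ := hs
    have hv0 : v' = GState.v0 := hv'
    subst hv0
    constructor
    · -- existence of a related difference string
      cases s with
      | nil => exact ⟨[], ⟨w, GState.v0, rfl, htr⟩, Or.inl ⟨rfl, rfl⟩⟩
      | cons y r =>
        exact ⟨Sum.inl y :: (r.map (Stmt7Aux.colO col)).map Sum.inr,
          ⟨w, GState.v0, rfl, htr⟩,
          Or.inr ⟨y, r, _, rfl, rfl, Stmt7Aux.deltaFrom_relF col y r⟩⟩
    · intro t ht
      have hts : t = Stmt7Aux.encS col s := by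
        rcases ht.2 with ⟨hs0, ht0⟩ | ⟨y, rest, ds, hseq, hteq, hdf⟩
        · subst hs0; subst ht0; rfl
        · subst hseq; subst hteq
          rw [Stmt7Aux.deltaFrom_relF_eq col hdf]
          simp [Stmt7Aux.encS, List.map_map, Function.comp]
      subst hts
      refine ⟨⟨w, GState.v0, rfl, Stmt7Aux.fwd0 col E htr⟩, ?_⟩
      intro c hc
      rcases Set.mem_iUnion₂.1 hc with ⟨w', ⟨v'', hv'', htr'⟩, hcw⟩
      have hv0' : v'' = GState.v0 := hv''
      subst hv0'
      have htr'' := Stmt7Aux.bwd0 col E hloop hcol htr htr'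
      exact Set.mem_iUnion₂.2 ⟨w', ⟨GState.v0, rfl, htr''⟩, hcw⟩
  · -- variator with a derivative ⇒ 3-coloring
    rintro ⟨D, instD, rel, hcard, F', hsim⟩
    letI := instD
    -- for each edge endpoint there is a difference from the fresh symbol
    have hne : ∀ (j : Fin m) (b : Bool),
        ∃ d, rel none d (some (if b then (E j).2 else (E j).1)) := by
      intro j b
      obtain ⟨t, ht⟩ := (hsim _ (Stmt7Aux.mid_lang E hm j b)).1
      rcases ht.2 with ⟨hs0, -⟩ | ⟨y, rest, ds, hseq, -, hdf⟩
      · exact absurd hs0 (by simp [Stmt7Aux.midStr])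
      · rw [Stmt7Aux.midStr] at hseq
        injection hseq with hy hrest
        subst hy; subst hrest
        rcases Stmt7Aux.deltaFrom_concat_inv hdf with ⟨ds', d, -, -, hd⟩
        rw [Stmt7Aux.getLastD_B] at hd
        exact ⟨d, hd⟩
    -- the two endpoints of an edge never share a difference
    have hdisj : ∀ j : Fin m,
        ¬∃ d, rel none d (some (E j).1) ∧ rel none d (some (E j).2) := by
      rintro j ⟨d, hd1, hd2⟩
      obtain ⟨t, ht⟩ := (hsim _ (Stmt7Aux.mid_lang E hm j false)).1
      rcases ht.2 with ⟨hs0, -⟩ | ⟨y, rest, ds, hseq, -, hdf⟩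
      · exact absurd hs0 (by simp [Stmt7Aux.midStr])
      · rw [Stmt7Aux.midStr] at hseq
        injection hseq with hy hrest
        subst hy; subst hrest
        rcases Stmt7Aux.deltaFrom_concat_inv hdf with ⟨ds', d0, -, hds', -⟩
        set t' : List (Option Vg ⊕ D) :=
          Sum.inl (none : Option Vg) :: (ds' ++ [d]).map Sum.inr with ht'
        have hR : ∀ b : Bool, DeltaRel (FG E).lang rel
            (Stmt7Aux.midStr E hm j b) t' := by
          intro b
          refine ⟨Stmt7Aux.mid_lang E hm j b, Or.inr
            ⟨none, _, ds' ++ [d], rfl, rfl, ?_⟩⟩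
          refine Stmt7Aux.deltaFrom_concat hds' ?_
          rw [Stmt7Aux.getLastD_B]
          cases b
          · exact hd1
          · exact hd2
        have h1 := (hsim _ (Stmt7Aux.mid_lang E hm j false)).2 t' (hR false)
        have h2 := (hsim _ (Stmt7Aux.mid_lang E hm j true)).2 t' (hR true)
        obtain ⟨w, hw⟩ := h1.1
        obtain ⟨c, hc⟩ := F'.out_nonempty w
        have hmem : c ∈ F'.outs t' := Set.mem_iUnion₂.2 ⟨w, hw, hc⟩
        have hc1 := Stmt7Aux.outs_mid E hloop hm j false (h1.2 hmem)
        have hc2 := Stmt7Aux.outs_mid E hloop hm j true (h2.2 hmem)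
        simp only [if_pos, if_neg, Bool.false_eq_true, ite_false, ite_true,
          Set.mem_singleton_iff] at hc1 hc2
        rw [hc1] at hc2
        exact absurd hc2 (by decide)
    -- build the coloring from an injection of `D` into `Fin 3`
    obtain ⟨f⟩ : Nonempty (D ↪ Fin 3) :=
      Function.Embedding.nonempty_of_card_le
        (by rw [Fintype.card_fin]; exact hcard)
    refine ⟨fun v => if h : ∃ d, rel none d (some v) then f h.choose else 0, ?_⟩
    intro j hcc
    have h1 : ∃ d, rel none d (some (E j).1) := by simpa using hne j false
    have h2 : ∃ d, rel none d (some (E j).2) := by simpa using hne j true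
    simp only [dif_pos h1, dif_pos h2] at hcc
    have hch : h1.choose = h2.choose := f.injective hcc
    exact hdisj j ⟨h1.choose, h1.choose_spec, hch ▸ h2.choose_spec⟩
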